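/- Let μ₁, μ₂ < 0 and let m = (μ₂/μ₁)^(1/4). Suppose β² < μ₁·μ₂. Then there exists δ > 0 such that for all u₁, u₂ > 0: m·(μ₁·u₁³ + β·u₁·u₂²) + μ₂·u₂³ + β·u₁²·u₂ ≤ -δ·(m·u₁ + u₂)³. -/

import Mathlib

set_option maxHeartbeats 1000000


theorem exists_delta_cubic_bound (μ₁ μ₂ β : ℝ) (hμ₁ : μ₁ < 0) (hμ₂ : μ₂ < 0)
    (hβ : β ^ 2 < μ₁ * μ₂) :
    ∃ δ > 0, ∀ u₁ u₂ : ℝ, 0 < u₁ → 0 < u₂ →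
      (μ₂ / μ₁) ^ ((1 : ℝ) / 4) * (μ₁ * u₁ ^ 3 + β * u₁ * u₂ ^ 2) +
          μ₂ * u₂ ^ 3 + β * u₁ ^ 2 * u₂ ≤
        -δ * ((μ₂ / μ₁) ^ ((1 : ℝ) / 4) * u₁ + u₂) ^ 3 := by
  have hμ₁' : μ₁ ≠ 0 := ne_of_lt hμ₁
  set m := (μ₂ / μ₁) ^ ((1 : ℝ) / 4) with hm_def
  have hq : 0 < μ₂ / μ₁ := div_pos_of_neg_of_neg hμ₂ hμ₁
  have hm : 0 < m := Real.rpow_pos_of_pos hq _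
  have hm4 : m ^ (4 : ℕ) = μ₂ / μ₁ := by
    rw [hm_def, ← Real.rpow_natCast ((μ₂ / μ₁) ^ ((1 : ℝ) / 4)) 4,
      ← Real.rpow_mul hq.le]
    norm_num
  have hμ2 : μ₂ = μ₁ * m ^ 4 := by
    field_simp at hm4
    linarith [hm4]
  clear_value m
  set A := -μ₁ with hA_def
  have hA : 0 < A := by rw [hA_def]; linarith
  have habs : |β| < A * m ^ 2 := by
    have hpos : (0 : ℝ) ≤ A * m ^ 2 := by positivity
    have hsq : |β| ^ 2 < (A * m ^ 2) ^ 2 := by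
      have heq : (A * m ^ 2) ^ 2 = μ₁ * μ₂ := by rw [hA_def, hμ2]; ring
      rw [sq_abs, heq]; exact hβ
    exact lt_of_pow_lt_pow_left₀ 2 hpos hsq
  clear_value A
  set a := A * m with ha_def
  set b := |β| / m with hb_def
  have ha : 0 < a := by positivity
  have hb : 0 ≤ b := by positivity
  have hba : b < a := by
    rw [hb_def, div_lt_iff₀ hm, ha_def]
    nlinarith [habs]
  set k := min m m⁻¹ with hk_def
  have hk : 0 < k := lt_min hm (inv_pos.mpr hm)
  have hk1 : k * m ≤ 1 := by
    have : k ≤ m⁻¹ := min_le_right _ _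
    calc k * m ≤ m⁻¹ * m := by nlinarith
    _ = 1 := inv_mul_cancel₀ hm.ne'
  have hk2 : k ≤ m := min_le_left _ _
  clear_value a b k
  refine ⟨(a - b) / 4 * k ^ 3, mul_pos (by linarith) (pow_pos hk 3), ?_⟩
  intro u₁ u₂ h1 h2
  have hy : 0 < m * u₂ := mul_pos hm h2
  have hxy : (0 : ℝ) ≤ u₁ + m * u₂ := by positivity
  -- Step A: core algebraic inequality
  have stepA : (a - b) / 4 * (u₁ + m * u₂) ^ 3 ≤
      a * (u₁ ^ 3 + (m * u₂) ^ 3) - b * u₁ * (m * u₂) * (u₁ + m * u₂) := by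
    nlinarith [mul_nonneg (mul_nonneg (by linarith : (0:ℝ) ≤ 3 * a + b) hxy)
      (sq_nonneg (u₁ - m * u₂))]
  -- Step B: bound the original LHS
  have hb_eq : b * u₁ * (m * u₂) = |β| * (u₁ * u₂) := by
    rw [hb_def]; field_simp
  have hβB : β * (u₁ * u₂ * (u₁ + m * u₂)) ≤ |β| * (u₁ * u₂ * (u₁ + m * u₂)) :=
    mul_le_mul_of_nonneg_right (le_abs_self β) (by positivity)
  have hLHS_eq : m * (μ₁ * u₁ ^ 3 + β * u₁ * u₂ ^ 2) + μ₂ * u₂ ^ 3 + β * u₁ ^ 2 * u₂ =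
      -(a * (u₁ ^ 3 + (m * u₂) ^ 3)) + β * (u₁ * u₂ * (u₁ + m * u₂)) := by
    rw [ha_def, hA_def, hμ2]; ring
  have stepB : m * (μ₁ * u₁ ^ 3 + β * u₁ * u₂ ^ 2) + μ₂ * u₂ ^ 3 + β * u₁ ^ 2 * u₂ ≤
      -(a * (u₁ ^ 3 + (m * u₂) ^ 3) - b * u₁ * (m * u₂) * (u₁ + m * u₂)) := by
    rw [hLHS_eq]
    nlinarith [hβB, hb_eq]
  -- Step C: comparison of the cubes
  have hlin : k * (m * u₁ + u₂) ≤ u₁ + m * u₂ := by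
    nlinarith [mul_le_mul_of_nonneg_right hk1 h1.le,
      mul_le_mul_of_nonneg_right hk2 h2.le]
  have hcube : (k * (m * u₁ + u₂)) ^ 3 ≤ (u₁ + m * u₂) ^ 3 :=
    pow_le_pow_left₀ (by positivity) hlin 3
  have hab4 : (0 : ℝ) ≤ (a - b) / 4 := by linarith
  have h5 : (a - b) / 4 * (k * (m * u₁ + u₂)) ^ 3 ≤ (a - b) / 4 * (u₁ + m * u₂) ^ 3 :=
    mul_le_mul_of_nonneg_left hcube hab4
  linarith only [stepA, stepB, h5]
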